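/- Let L ∈ ℝ^{m×n} have compact SVD L = W Σ Vᵀ of rank r, and let C = L(:,J) for J ⊆ [n] be such that V(J,:) has full row rank r. Then ‖C†‖₂ ≤ ‖L†‖₂ · ‖(V(J,:))†‖₂, where † denotes the Moore–Penrose pseudoinverse. -/

import Mathlib

open Matrix BigOperators MeasureTheory

noncomputable def specNorm {m n : ℕ} (A : Matrix (Fin m) (Fin n) ℝ) : ℝ :=
  ‖LinearMap.toContinuousLinearMap (Matrix.toEuclideanLin A)‖

def IsMPInv {m n : ℕ} (A : Matrix (Fin m) (Fin n) ℝ) (B : Matrix (Fin n) (Fin m) ℝ) : Prop :=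
  A * B * A = A ∧ B * A * B = B ∧ (A * B)ᵀ = A * B ∧ (B * A)ᵀ = B * A

noncomputable def rowNorm {m n : ℕ} (A : Matrix (Fin m) (Fin n) ℝ) (i : Fin m) : ℝ :=
  Real.sqrt (∑ j, (A i j) ^ 2)

noncomputable def entryMax {m n : ℕ} (A : Matrix (Fin m) (Fin n) ℝ) : ℝ :=
  ⨆ i, ⨆ j, |A i j|

section helpers

lemma specNorm_nonneg {m n : ℕ} (A : Matrix (Fin m) (Fin n) ℝ) : 0 ≤ specNorm A :=
  norm_nonneg _

lemma toCLM_mul {m n p : ℕ} (A : Matrix (Fin m) (Fin n) ℝ) (B : Matrix (Fin n) (Fin p) ℝ) :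
    LinearMap.toContinuousLinearMap (Matrix.toEuclideanLin (A * B)) =
      (LinearMap.toContinuousLinearMap (Matrix.toEuclideanLin A)).comp
        (LinearMap.toContinuousLinearMap (Matrix.toEuclideanLin B)) := by
  ext x
  simp [Matrix.toEuclideanLin_eq_toLin, Matrix.toLin_mul _ (PiLp.basisFun 2 ℝ (Fin n)) _]

lemma specNorm_mul_le {m n p : ℕ} (A : Matrix (Fin m) (Fin n) ℝ) (B : Matrix (Fin n) (Fin p) ℝ) :
    specNorm (A * B) ≤ specNorm A * specNorm B := by
  rw [specNorm, toCLM_mul]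
  exact ContinuousLinearMap.opNorm_comp_le _ _

lemma specNorm_transpose {m n : ℕ} (A : Matrix (Fin m) (Fin n) ℝ) :
    specNorm Aᵀ = specNorm A := by
  have h : Aᵀ = Aᴴ := by ext i j; simp [Matrix.conjTranspose_apply]
  rw [specNorm, h, Matrix.toEuclideanLin_conjTranspose_eq_adjoint,
    LinearMap.adjoint_toContinuousLinearMap]
  exact LinearIsometryEquiv.norm_map ContinuousLinearMap.adjoint _

lemma specNorm_le_one_of_isometry {m n : ℕ} (A : Matrix (Fin m) (Fin n) ℝ)
    (h : Aᵀ * A = 1) : specNorm A ≤ 1 := by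
  apply ContinuousLinearMap.opNorm_le_bound _ zero_le_one
  intro x
  rw [one_mul, LinearMap.coe_toContinuousLinearMap']
  have hAH : Aᴴ = Aᵀ := by ext i j; simp [Matrix.conjTranspose_apply]
  have key : Matrix.toEuclideanLin Aᵀ (Matrix.toEuclideanLin A x) = x := by
    have h2 : Matrix.toEuclideanLin (Aᵀ * A) x = Matrix.toEuclideanLin (1 : Matrix (Fin n) (Fin n) ℝ) x := by
      rw [h]
    simpa [Matrix.toEuclideanLin_eq_toLin, Matrix.toLin_mul _ (PiLp.basisFun 2 ℝ (Fin m)) _] using h2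
  have hsq : ‖Matrix.toEuclideanLin A x‖ ^ 2 = ‖x‖ ^ 2 := by
    rw [← real_inner_self_eq_norm_sq, ← real_inner_self_eq_norm_sq]
    calc inner ℝ (Matrix.toEuclideanLin A x) (Matrix.toEuclideanLin A x)
        = inner ℝ x (LinearMap.adjoint (Matrix.toEuclideanLin A) (Matrix.toEuclideanLin A x)) := by
          rw [LinearMap.adjoint_inner_right]
      _ = (inner ℝ x x : ℝ) := by
          rw [← Matrix.toEuclideanLin_conjTranspose_eq_adjoint, hAH, key]
  calc ‖Matrix.toEuclideanLin A x‖ = Real.sqrt (‖Matrix.toEuclideanLin A x‖ ^ 2) :=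
        (Real.sqrt_sq (norm_nonneg _)).symm
    _ = Real.sqrt (‖x‖ ^ 2) := by rw [hsq]
    _ = ‖x‖ := Real.sqrt_sq (norm_nonneg _)
    _ ≤ ‖x‖ := le_rfl

lemma mp_unique {m n : ℕ} {A : Matrix (Fin m) (Fin n) ℝ} {B₁ B₂ : Matrix (Fin n) (Fin m) ℝ}
    (h1 : IsMPInv A B₁) (h2 : IsMPInv A B₂) : B₁ = B₂ := by
  obtain ⟨a1, b1, c1, d1⟩ := h1
  obtain ⟨a2, b2, c2, d2⟩ := h2
  have hAB : A * B₁ = A * B₂ := by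
    calc A * B₁ = (A * B₂ * A) * B₁ := by rw [a2]
      _ = (A * B₂) * (A * B₁) := by rw [Matrix.mul_assoc]
      _ = (A * B₂)ᵀ * (A * B₁)ᵀ := by rw [c1, c2]
      _ = (A * B₁ * (A * B₂))ᵀ := (Matrix.transpose_mul _ _).symm
      _ = ((A * B₁ * A) * B₂)ᵀ := by rw [Matrix.mul_assoc (A * B₁) A B₂]
      _ = (A * B₂)ᵀ := by rw [a1]
      _ = A * B₂ := c2
  have hBA : B₁ * A = B₂ * A := by
    calc B₁ * A = B₁ * (A * B₂ * A) := by rw [a2]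
      _ = (B₁ * A) * (B₂ * A) := by simp only [Matrix.mul_assoc]
      _ = (B₁ * A)ᵀ * (B₂ * A)ᵀ := by rw [d1, d2]
      _ = (B₂ * A * (B₁ * A))ᵀ := (Matrix.transpose_mul _ _).symm
      _ = ((B₂ * A * B₁) * A)ᵀ := by rw [Matrix.mul_assoc (B₂ * A) B₁ A]
      _ = (B₂ * (A * B₁ * A))ᵀ := by simp only [Matrix.mul_assoc]
      _ = (B₂ * A)ᵀ := by rw [a1]
      _ = B₂ * A := d2
  calc B₁ = B₁ * A * B₁ := b1.symm
    _ = B₁ * (A * B₂) := by rw [Matrix.mul_assoc, hAB]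
    _ = B₂ * A * B₂ := by rw [← Matrix.mul_assoc, hBA, Matrix.mul_assoc, ← hAB, ← Matrix.mul_assoc]
    _ = B₂ := b2

end helpers

theorem stmt2 (m n r k : ℕ)
    (L : Matrix (Fin m) (Fin n) ℝ)
    (W : Matrix (Fin m) (Fin r) ℝ) (σ : Fin r → ℝ) (V : Matrix (Fin n) (Fin r) ℝ)
    (hW : Wᵀ * W = 1) (hV : Vᵀ * V = 1) (hσ : ∀ i, 0 < σ i)
    (hL : L = W * Matrix.diagonal σ * Vᵀ)
    (hrank : L.rank = r)
    (g : Fin k → Fin n) (hg : Function.Injective g)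
    (C : Matrix (Fin m) (Fin k) ℝ) (hC : C = L.submatrix id g)
    (hVJrank : (V.submatrix g id).rank = r)
    (Cd : Matrix (Fin k) (Fin m) ℝ) (hCd : IsMPInv C Cd)
    (Ld : Matrix (Fin n) (Fin m) ℝ) (hLd : IsMPInv L Ld)
    (VJd : Matrix (Fin r) (Fin k) ℝ) (hVJd : IsMPInv (V.submatrix g id) VJd) :
    specNorm Cd ≤ specNorm Ld * specNorm VJd := by
  set P : Matrix (Fin k) (Fin r) ℝ := V.submatrix g id with hP
  set D : Matrix (Fin r) (Fin r) ℝ := Matrix.diagonal σ with hD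
  set E : Matrix (Fin r) (Fin r) ℝ := Matrix.diagonal (fun i => (σ i)⁻¹) with hE
  have hDE : D * E = 1 := by
    rw [hD, hE, Matrix.diagonal_mul_diagonal]
    rw [show (fun i => σ i * (σ i)⁻¹) = fun _ => (1 : ℝ) from
      funext fun i => mul_inv_cancel₀ (hσ i).ne', Matrix.diagonal_one]
  have hED : E * D = 1 := by
    rw [hD, hE, Matrix.diagonal_mul_diagonal]
    rw [show (fun i => (σ i)⁻¹ * σ i) = fun _ => (1 : ℝ) from
      funext fun i => inv_mul_cancel₀ (hσ i).ne', Matrix.diagonal_one]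
  -- cancellation helpers
  have cancelV : ∀ {p : ℕ} (X : Matrix (Fin r) (Fin p) ℝ), Vᵀ * (V * X) = X := by
    intro p X; rw [← Matrix.mul_assoc, hV, Matrix.one_mul]
  have cancelW : ∀ {p : ℕ} (X : Matrix (Fin r) (Fin p) ℝ), Wᵀ * (W * X) = X := by
    intro p X; rw [← Matrix.mul_assoc, hW, Matrix.one_mul]
  have cancelDE : ∀ {p : ℕ} (X : Matrix (Fin r) (Fin p) ℝ), D * (E * X) = X := by
    intro p X; rw [← Matrix.mul_assoc, hDE, Matrix.one_mul]
  have cancelED : ∀ {p : ℕ} (X : Matrix (Fin r) (Fin p) ℝ), E * (D * X) = X := by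
    intro p X; rw [← Matrix.mul_assoc, hED, Matrix.one_mul]
  -- C = W * D * Pᵀ
  have hCP : C = W * D * Pᵀ := by
    rw [hC, hL]
    ext i j
    simp [Matrix.mul_apply, Matrix.submatrix_apply, hP]
  -- VJd * P = 1
  have hPQ : P * (VJd * P) = P := by
    rw [← Matrix.mul_assoc]; exact hVJd.1
  have hQQ : (VJd * P) * (VJd * P) = VJd * P := by
    rw [← Matrix.mul_assoc, hVJd.2.1]
  have hQrank : r ≤ (VJd * P).rank := by
    calc r = P.rank := hVJrank.symm
      _ = (P * (VJd * P)).rank := by rw [hPQ]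
      _ ≤ (VJd * P).rank := Matrix.rank_mul_le_right _ _
  have hQunit : IsUnit (VJd * P) := by
    rw [← Matrix.mulVec_surjective_iff_isUnit]
    have hrange : LinearMap.range (VJd * P).mulVecLin = ⊤ := by
      apply Submodule.eq_top_of_finrank_eq
      have h1 : (VJd * P).rank ≤ r := by
        simpa using Matrix.rank_le_card_width (VJd * P)
      have h2 : (VJd * P).rank = r := le_antisymm h1 hQrank
      rw [show Module.finrank ℝ ↥(LinearMap.range (VJd * P).mulVecLin) = (VJd * P).rank from rfl,
        h2]
      simp [Module.finrank_pi]
    intro y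
    have := LinearMap.range_eq_top.mp hrange y
    obtain ⟨x, hx⟩ := this
    exact ⟨x, hx⟩
  have hQ1 : VJd * P = 1 := by
    apply hQunit.mul_left_cancel
    rw [mul_one]; exact hQQ
  have hPt : Pᵀ * VJdᵀ = 1 := by
    rw [← Matrix.transpose_mul, hQ1, Matrix.transpose_one]
  have cancelP : ∀ {p : ℕ} (X : Matrix (Fin r) (Fin p) ℝ), Pᵀ * (VJdᵀ * X) = X := by
    intro p X; rw [← Matrix.mul_assoc, hPt, Matrix.one_mul]
  -- Ld = V * E * Wᵀ
  have hLdMP : IsMPInv L (V * E * Wᵀ) := by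
    have hLM : L * (V * E * Wᵀ) = W * Wᵀ := by
      rw [hL]; simp only [Matrix.mul_assoc]; rw [cancelV, cancelDE]
    have hML : (V * E * Wᵀ) * L = V * Vᵀ := by
      rw [hL]; simp only [Matrix.mul_assoc]; rw [cancelW, cancelED]
    refine ⟨?_, ?_, ?_, ?_⟩
    · rw [hLM, hL]; simp only [Matrix.mul_assoc]; rw [cancelW]
    · rw [hML]; simp only [Matrix.mul_assoc]; rw [cancelV]
    · rw [hLM, Matrix.transpose_mul, Matrix.transpose_transpose]
    · rw [hML, Matrix.transpose_mul, Matrix.transpose_transpose]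
  have hLd2 : Ld = V * E * Wᵀ := mp_unique hLd hLdMP
  -- Cd = VJdᵀ * E * Wᵀ
  have hCdMP : IsMPInv C (VJdᵀ * E * Wᵀ) := by
    have hCB : C * (VJdᵀ * E * Wᵀ) = W * Wᵀ := by
      rw [hCP]; simp only [Matrix.mul_assoc]; rw [cancelP, cancelDE]
    have hBC : (VJdᵀ * E * Wᵀ) * C = VJdᵀ * Pᵀ := by
      rw [hCP]; simp only [Matrix.mul_assoc]; rw [cancelW, cancelED]
    refine ⟨?_, ?_, ?_, ?_⟩
    · rw [hCB, hCP]; simp only [Matrix.mul_assoc]; rw [cancelW]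
    · rw [hBC]; simp only [Matrix.mul_assoc]; rw [cancelP]
    · rw [hCB, Matrix.transpose_mul, Matrix.transpose_transpose]
    · rw [hBC, Matrix.transpose_mul, Matrix.transpose_transpose,
        Matrix.transpose_transpose, ← Matrix.transpose_mul]
      exact hVJd.2.2.1.symm
  have hCd2 : Cd = VJdᵀ * E * Wᵀ := mp_unique hCd hCdMP
  -- norm bounds
  have nV : specNorm Vᵀ ≤ 1 := by
    rw [specNorm_transpose]; exact specNorm_le_one_of_isometry V hV
  have nW : specNorm W ≤ 1 := specNorm_le_one_of_isometry W hW
  have nWT : specNorm Wᵀ ≤ 1 := by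
    rw [specNorm_transpose]; exact specNorm_le_one_of_isometry W hW
  have hEeq : E = Vᵀ * (Ld * W) := by
    rw [hLd2]
    simp only [Matrix.mul_assoc]
    rw [hW, Matrix.mul_one, cancelV]
  have nE : specNorm E ≤ specNorm Ld := by
    calc specNorm E = specNorm (Vᵀ * (Ld * W)) := by rw [← hEeq]
      _ ≤ specNorm Vᵀ * specNorm (Ld * W) := specNorm_mul_le _ _
      _ ≤ specNorm Vᵀ * (specNorm Ld * specNorm W) :=
          mul_le_mul_of_nonneg_left (specNorm_mul_le _ _) (specNorm_nonneg _)
      _ ≤ 1 * (specNorm Ld * 1) := by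
          apply mul_le_mul nV
            (mul_le_mul_of_nonneg_left nW (specNorm_nonneg _))
            (mul_nonneg (specNorm_nonneg _) (specNorm_nonneg _)) zero_le_one
      _ = specNorm Ld := by ring
  calc specNorm Cd = specNorm (VJdᵀ * (E * Wᵀ)) := by rw [hCd2, Matrix.mul_assoc]
    _ ≤ specNorm VJdᵀ * specNorm (E * Wᵀ) := specNorm_mul_le _ _
    _ ≤ specNorm VJd * specNorm Ld := by
        rw [specNorm_transpose]
        refine mul_le_mul_of_nonneg_left ?_ (specNorm_nonneg _)
        calc specNorm (E * Wᵀ) ≤ specNorm E * specNorm Wᵀ := specNorm_mul_le _ _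
          _ ≤ specNorm Ld * 1 :=
              mul_le_mul nE nWT (specNorm_nonneg _) (specNorm_nonneg _)
          _ = specNorm Ld := mul_one _
    _ = specNorm Ld * specNorm VJd := mul_comm _ _
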